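/- For all x, z, x* ∈ ℝ^d and every α > 0, if ‖x − z‖ < α, then |exp(−‖x − x*‖²/2) − exp(−‖z − x*‖²/2)| < 1 − exp(−α(‖z − x*‖ + 3α/2)). -/
import Mathlib

lemma stmt_4_aux (u v c : ℝ) (hu : 0 ≤ u) (hv : 0 ≤ v) (h : |u - v| < c) :
    |Real.exp (-u) - Real.exp (-v)| < 1 - Real.exp (-c) := by
  rcases abs_lt.1 h with ⟨hl, hr⟩
  have hA : Real.exp (-u) ≤ 1 := Real.exp_le_one_iff.2 (by linarith)
  rcases le_total u v with huv | huv
  · have hE : Real.exp (-c) < Real.exp (u - v) := Real.exp_lt_exp.2 (by linarith)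
    have hE1 : Real.exp (u - v) ≤ 1 := Real.exp_le_one_iff.2 (by linarith)
    have hprod : Real.exp (-u) * Real.exp (u - v) = Real.exp (-v) := by
      rw [← Real.exp_add]; ring_nf
    have hmono : Real.exp (-v) ≤ Real.exp (-u) := Real.exp_le_exp.2 (by linarith)
    rw [abs_of_nonneg (by linarith)]
    nlinarith [Real.exp_pos (-u), Real.exp_pos (u - v)]
  · 
    have hB : Real.exp (-v) ≤ 1 := Real.exp_le_one_iff.2 (by linarith)
    have hE : Real.exp (-c) < Real.exp (v - u) := Real.exp_lt_exp.2 (by linarith)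
    have hE1 : Real.exp (v - u) ≤ 1 := Real.exp_le_one_iff.2 (by linarith)
    have hprod : Real.exp (-v) * Real.exp (v - u) = Real.exp (-u) := by
      rw [← Real.exp_add]; ring_nf
    have hmono : Real.exp (-u) ≤ Real.exp (-v) := Real.exp_le_exp.2 (by linarith)
    rw [abs_of_nonpos (by linarith)]
    nlinarith [Real.exp_pos (-v), Real.exp_pos (v - u)]

/-- error bound for the Gaussian covariance function at a new input. -/
theorem stmt_4 (d : ℕ) (x z xstar : EuclideanSpace ℝ (Fin d)) (α : ℝ) (hα : 0 < α)
    (h1 : ‖x - z‖ < α) :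
    |Real.exp (-‖x - xstar‖ ^ 2 / 2) - Real.exp (-‖z - xstar‖ ^ 2 / 2)| <
      1 - Real.exp (-(α * (‖z - xstar‖ + 3 * α / 2))) := by
  set a := ‖x - xstar‖ with ha
  set b := ‖z - xstar‖ with hb
  have hd : |a - b| ≤ ‖x - z‖ := by
    have := abs_norm_sub_norm_le (x - xstar) (z - xstar)
    simpa [sub_sub_sub_cancel_right] using this
  have hdα : |a - b| < α := lt_of_le_of_lt hd h1
  rcases abs_lt.1 hdα with ⟨hl, hr⟩
  have ha0 : 0 ≤ a := norm_nonneg _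
  have hb0 : 0 ≤ b := norm_nonneg _
  have hkey : |a ^ 2 / 2 - b ^ 2 / 2| < α * (b + 3 * α / 2) := by
    rw [abs_lt]
    constructor <;> nlinarith [abs_nonneg (a - b)]
  have h2 : -a ^ 2 / 2 = -(a ^ 2 / 2) := by ring
  have h3 : -b ^ 2 / 2 = -(b ^ 2 / 2) := by ring
  rw [h2, h3]
  exact stmt_4_aux (a ^ 2 / 2) (b ^ 2 / 2) _ (by positivity) (by positivity) hkey
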